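/- Let n be a positive integer with gcd(n,q) = 1. Let w := ord_{rad(n)}(q), set s := w if 4 ∤ n or q^w ≡ 1 (mod 4) and s := 2w otherwise, and set d^{(s)} := gcd(n, q^s−1). Then the n-th cyclotomic polynomial Φ_n factors over F_q into exactly φ(d^{(s)})/s monic irreducible factors, each of degree (n/d^{(s)})·s, and this factorization is Φ_n = ∏_{i ∈ 𝓒(q,d^{(s)}), gcd(i,d^{(s)})=1} [ ∑_{l=0}^{s} X^{(n/d^{(s)})·l} · (−1)^{s−l} ∑_{U ⊆ {0,…,s−1}, |U| = s−l} ∏_{u ∈ U} ζ_{d^{(s)}}^{i·q^u} ]. -/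

import Mathlib

open Polynomial

/-- The polynomial `∑_{l=0}^{c} X^{e l} (-1)^{c-l} ∑_{U ⊆ {0,…,c-1}, |U| = c-l} ∏_{u ∈ U} γ^{q^u}`,
i.e. the `q`-spin `∏_{u=0}^{c-1} (X^e - γ^{q^u})` written out coefficientwise. -/
noncomputable def Spoly {Ω : Type*} [Field Ω] (q e c : ℕ) (γ : Ω) : Polynomial Ω :=
  ∑ l ∈ Finset.range (c + 1),
    Polynomial.C ((-1 : Ω) ^ (c - l) *
      ∑ U ∈ Finset.powersetCard (c - l) (Finset.range c), ∏ u ∈ U, γ ^ q ^ u) *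
    Polynomial.X ^ (e * l)


lemma dvd_pow_sub_one_iff {q k t : ℕ} (hq : 1 ≤ q) :
    k ∣ q ^ t - 1 ↔ (q : ZMod k) ^ t = 1 := by
  have h1 : 1 ≤ q ^ t := Nat.one_le_pow _ _ hq
  have : ((q : ZMod k)) ^ t = ((q ^ t : ℕ) : ZMod k) := by push_cast; ring
  rw [this, show (1 : ZMod k) = ((1 : ℕ) : ZMod k) by push_cast; ring,
    ZMod.natCast_eq_natCast_iff]
  constructor
  · intro h
    exact ((Nat.modEq_iff_dvd' h1).mpr h).symm
  · intro h
    exact (Nat.modEq_iff_dvd' h1).mp h.symm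

lemma ord_dvd_iff {q k : ℕ} (hq : 1 ≤ q) (t : ℕ) :
    orderOf (q : ZMod k) ∣ t ↔ k ∣ q ^ t - 1 := by
  rw [orderOf_dvd_iff_pow_eq_one, dvd_pow_sub_one_iff hq]

lemma ord_pos {q k : ℕ} (hco : Nat.Coprime q k) (hk : 0 < k) :
    0 < orderOf (q : ZMod k) := by
  haveI : NeZero k := ⟨hk.ne'⟩
  have h := ZMod.coe_unitOfCoprime q hco
  rw [← h, orderOf_units]
  exact orderOf_pos _

lemma dvd_ord_pow_sub_one {q k : ℕ} (hq : 1 ≤ q) :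
    k ∣ q ^ (orderOf (q : ZMod k)) - 1 :=
  (ord_dvd_iff hq _).mp dvd_rfl

lemma v2_pow_sub_one_of_odd {x t : ℕ} (h1 : 1 < x) (hx : ¬ 2 ∣ x) (ht : Odd t) :
    padicValNat 2 (x ^ t - 1) = padicValNat 2 (x - 1) := by
  set S : ℕ := ∑ i ∈ Finset.range t, x ^ i with hS
  have key : x ^ t - 1 = (x - 1) * S := by
    have h1' : (1:ℤ) ≤ (x:ℤ) := by exact_mod_cast h1.le
    have hzz : ((x:ℤ) - 1) * (S : ℤ) = (x:ℤ) ^ t - 1 := by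
      rw [hS]
      push_cast
      rw [mul_comm]
      exact geom_sum_mul (x:ℤ) t
    have : ((x ^ t - 1 : ℕ) : ℤ) = (((x - 1) * S : ℕ) : ℤ) := by
      rw [Nat.cast_mul, Nat.cast_sub h1.le, Nat.cast_sub (Nat.one_le_pow _ _ (by omega))]
      push_cast
      linarith [hzz]
    exact_mod_cast this
  have hSodd : ¬ 2 ∣ S := by
    have : S % 2 = 1 := by
      rw [hS, Finset.sum_nat_mod]
      have : ∀ i ∈ Finset.range t, x ^ i % 2 = 1 := by
        intro i _
        have : ¬ 2 ∣ x ^ i := fun h => hx (Nat.Prime.dvd_of_dvd_pow Nat.prime_two h)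
        omega
      rw [Finset.sum_congr rfl this]
      simp only [Finset.sum_const, Finset.card_range, smul_eq_mul, mul_one]
      rcases ht with ⟨k, hk⟩
      omega
    omega
  have hS0 : S ≠ 0 := by intro h; rw [h] at hSodd; exact hSodd (dvd_zero 2)
  rw [key, padicValNat.mul (by omega) hS0,
    padicValNat.eq_zero_of_not_dvd hSodd, add_zero]

lemma val_le_of_prime {p x t : ℕ} (hp : p.Prime) (h1 : 1 < x) (hdvd : p ∣ x - 1) (ht : t ≠ 0)
    (h4 : p = 2 → Even t → x % 4 = 1) :
    padicValNat p (x ^ t - 1) ≤ padicValNat p (x - 1) + padicValNat p t := by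
  haveI : Fact p.Prime := ⟨hp⟩
  have hpx : ¬ p ∣ x := by
    intro h
    have h2 : p ∣ x - (x - 1) := Nat.dvd_sub h hdvd
    rw [show x - (x - 1) = 1 by omega] at h2
    exact hp.one_lt.ne' (Nat.dvd_one.mp h2)
  rcases eq_or_ne p 2 with rfl | hp2
  · rcases Nat.even_or_odd t with he | ho
    · have hx4 : x % 4 = 1 := h4 rfl he
      have := padicValNat.pow_two_sub_pow (y := 1) (by omega) (by omega) hpx ht he
      simp only [one_pow] at this
      have hv1 : padicValNat 2 (x + 1) = 1 := by
        have hd2 : 2 ∣ x + 1 := by omega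
        have hd4 : ¬ (2:ℕ) ^ 2 ∣ x + 1 := by
          rw [show (2:ℕ)^2 = 4 by norm_num]; omega
        have hge : 1 ≤ padicValNat 2 (x + 1) :=
          one_le_padicValNat_of_dvd (by omega) hd2
        have hlt : ¬ 2 ≤ padicValNat 2 (x + 1) := by
          intro h
          exact hd4 ((padicValNat_dvd_iff _ _).mpr (Or.inr h))
        omega
      omega
    · have hvt : padicValNat 2 t = 0 := by
        apply padicValNat.eq_zero_of_not_dvd
        have := Nat.odd_iff.mp ho; omega
      rw [v2_pow_sub_one_of_odd h1 hpx ho, hvt, add_zero]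
  · have hodd : Odd p := hp.odd_of_ne_two hp2
    rw [show x ^ t - 1 = x ^ t - 1 ^ t by simp,
      padicValNat.pow_sub_pow hodd (y := 1) (by omega) (by simpa using hdvd) hpx ht]

lemma val_ge_of_prime {p x t : ℕ} (hp : p.Prime) (h1 : 1 < x) (hdvd : p ∣ x - 1) (ht : t ≠ 0) :
    padicValNat p (x - 1) + padicValNat p t ≤ padicValNat p (x ^ t - 1) := by
  haveI : Fact p.Prime := ⟨hp⟩
  have hpx : ¬ p ∣ x := by
    intro h
    have h2 : p ∣ x - (x - 1) := Nat.dvd_sub h hdvd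
    rw [show x - (x - 1) = 1 by omega] at h2
    exact hp.one_lt.ne' (Nat.dvd_one.mp h2)
  have hxt1 : 1 < x ^ t := Nat.one_lt_pow ht h1
  rcases eq_or_ne p 2 with rfl | hp2
  · have hx2 : ¬ 2 ∣ x := hpx
    rcases Nat.even_or_odd t with he | ho
    · have := padicValNat.pow_two_sub_pow (y := 1) (by omega) (by omega) hpx ht he
      simp only [one_pow] at this
      have hge : 1 ≤ padicValNat 2 (x + 1) :=
        one_le_padicValNat_of_dvd (by omega) (by omega)
      omega
    · have hvt : padicValNat 2 t = 0 := by
        apply padicValNat.eq_zero_of_not_dvd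
        have := Nat.odd_iff.mp ho; omega
      rw [v2_pow_sub_one_of_odd h1 hpx ho, hvt, add_zero]
  · have hodd : Odd p := hp.odd_of_ne_two hp2
    rw [show x ^ t - 1 = x ^ t - 1 ^ t by simp,
      padicValNat.pow_sub_pow hodd (y := 1) (by omega) (by simpa using hdvd) hpx ht]

lemma totient_mul_of_primes_dvd : ∀ (e m : ℕ), 0 < m → (∀ p, p.Prime → p ∣ e → p ∣ m) →
    (e * m).totient = e * m.totient := by
  intro e
  induction e using Nat.strong_induction_on with
  | _ e ih =>
    intro m hm hp
    rcases eq_or_ne e 0 with rfl | he0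
    · simp
    rcases eq_or_ne e 1 with rfl | he1
    · simp
    have h2 : 2 ≤ e := by omega
    have hpp : e.minFac.Prime := Nat.minFac_prime he1
    obtain ⟨e', he⟩ := Nat.minFac_dvd e
    have hpm : e.minFac ∣ m := hp _ hpp ⟨e', he⟩
    have he'0 : e' ≠ 0 := by rintro rfl; omega
    have hlt : e' < e := by
      have h1 := hpp.one_lt
      have h2 : 1 * e' < e.minFac * e' := by
        apply Nat.mul_lt_mul_of_lt_of_le h1 le_rfl (by omega)
      omega
    have step : (e.minFac * e' * m).totient = e.minFac * (e' * m).totient := by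
      rw [mul_assoc]
      exact Nat.totient_mul_of_prime_of_dvd hpp (hpm.mul_left e')
    rw [he, step, ih e' hlt m hm (fun r hr hre => hp r hr (by rw [he]; exact hre.mul_left e.minFac)),
      mul_assoc]

/-- order of `q` mod `m = gcd n (q^s - 1)` equals `s`, plus auxiliary facts. -/
lemma ord_m_spec (q n w s : ℕ) (hn : 0 < n) (hq : 1 < q) (hcop : Nat.Coprime n q)
    (hw : w = orderOf (q : ZMod (∏ p ∈ n.primeFactors, p)))
    (hs : s = if ¬ 4 ∣ n ∨ q ^ w % 4 = 1 then w else 2 * w) :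
    0 < s ∧ (∏ p ∈ n.primeFactors, p) ∣ Nat.gcd n (q ^ s - 1) ∧
      orderOf (q : ZMod (Nat.gcd n (q ^ s - 1))) = s ∧ (4 ∣ n → q ^ s % 4 = 1) := by
  set r := ∏ p ∈ n.primeFactors, p with hr
  have hrn : r ∣ n := Nat.prod_primeFactors_dvd n
  have hr0 : 0 < r := Nat.pos_of_dvd_of_pos hrn hn
  have hqr : Nat.Coprime q r := (Nat.Coprime.coprime_dvd_left hrn hcop).symm
  have hw0 : 0 < w := hw ▸ ord_pos hqr hr0
  have hws : w ∣ s := by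
    rw [hs]; split_ifs
    · exact dvd_rfl
    · exact dvd_mul_left w 2
  have hs0 : 0 < s := by
    rw [hs]; split_ifs <;> omega
  have hrw : r ∣ q ^ w - 1 := by
    rw [hw]; exact dvd_ord_pow_sub_one (by omega)
  have hq1s : q ^ w - 1 ∣ q ^ s - 1 := by
    obtain ⟨c, rfl⟩ := hws
    have := Nat.sub_dvd_pow_sub_pow (q ^ w) 1 c
    rwa [one_pow, ← pow_mul] at this
  have hrm : r ∣ Nat.gcd n (q ^ s - 1) := Nat.dvd_gcd hrn (hrw.trans hq1s)
  set m := Nat.gcd n (q ^ s - 1) with hm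
  have hmdvd : m ∣ q ^ s - 1 := Nat.gcd_dvd_right _ _
  set o := orderOf (q : ZMod m) with ho
  have hos : o ∣ s := (ord_dvd_iff (by omega) s).mpr hmdvd
  have hwo : w ∣ o := by
    have h1 : m ∣ q ^ o - 1 := dvd_ord_pow_sub_one (by omega)
    have h2 : r ∣ q ^ o - 1 := hrm.trans h1
    rw [hw]
    exact (ord_dvd_iff (by omega) o).mpr h2
  by_cases hcase : ¬ 4 ∣ n ∨ q ^ w % 4 = 1
  · have hsw : s = w := by rw [hs, if_pos hcase]
    refine ⟨hs0, hrm, ?_, ?_⟩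
    · exact Nat.dvd_antisymm (hsw ▸ hos) (hsw ▸ hwo)
    · intro h4n
      rcases hcase with h | h
      · exact absurd h4n h
      · rw [hsw]; exact h
  · push_neg at hcase
    obtain ⟨h4n, hqw4⟩ := hcase
    have hsw : s = 2 * w := by rw [hs, if_neg (by push_neg; exact ⟨h4n, hqw4⟩)]
    have hq2 : ¬ 2 ∣ q := by
      intro h2q
      have : (2:ℕ) ∣ Nat.gcd n q := Nat.dvd_gcd (dvd_trans (by norm_num) h4n) h2q
      rw [Nat.Coprime] at hcop
      omega
    have hqwodd : q ^ w % 2 = 1 := by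
      have : ¬ 2 ∣ q ^ w := fun h => hq2 (Nat.Prime.dvd_of_dvd_pow Nat.prime_two h)
      omega
    have hqw3 : q ^ w % 4 = 3 := by omega
    have hqs4 : q ^ s % 4 = 1 := by
      have : q ^ s = (q ^ w) ^ 2 := by rw [← pow_mul, hsw, mul_comm]
      rw [this, Nat.pow_mod, hqw3]
    have h4qs : (4:ℕ) ∣ q ^ s - 1 := by
      have : 1 ≤ q ^ s := Nat.one_le_pow _ _ (by omega)
      omega
    have h4m : (4:ℕ) ∣ m := Nat.dvd_gcd h4n h4qs
    refine ⟨hs0, hrm, ?_, fun _ => hqs4⟩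
    obtain ⟨j, hj⟩ := hwo
    have hj2 : j ∣ 2 := by
      have h1 : w * j ∣ w * 2 := by rw [← hj, mul_comm w 2, ← hsw]; exact hos
      exact (mul_dvd_mul_iff_left hw0.ne').mp h1
    rcases (Nat.prime_two.eq_one_or_self_of_dvd j hj2) with rfl | rfl
    · exfalso
      rw [mul_one] at hj
      have h1 : m ∣ q ^ w - 1 := by rw [← hj]; exact dvd_ord_pow_sub_one (by omega)
      have h2 : (4:ℕ) ∣ q ^ w - 1 := h4m.trans h1
      have : 1 ≤ q ^ w := Nat.one_le_pow _ _ (by omega)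
      omega
    · rw [hsw, hj, mul_comm]

lemma ord_n_eq (q n s : ℕ) (hn : 0 < n) (hq : 1 < q) (hcop : Nat.Coprime n q) (hs0 : 0 < s)
    (hrad : (∏ p ∈ n.primeFactors, p) ∣ Nat.gcd n (q ^ s - 1))
    (hordm : orderOf (q : ZMod (Nat.gcd n (q ^ s - 1))) = s)
    (h4 : 4 ∣ n → q ^ s % 4 = 1) :
    orderOf (q : ZMod n) = (n / Nat.gcd n (q ^ s - 1)) * s := by
  set m := Nat.gcd n (q ^ s - 1) with hm
  set x := q ^ s with hx
  have hx1 : 1 < x := Nat.one_lt_pow hs0.ne' hq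
  have hqs1 : x - 1 ≠ 0 := by omega
  have hmn : m ∣ n := Nat.gcd_dvd_left _ _
  have hm0 : m ≠ 0 := fun h => hn.ne' (Nat.eq_zero_of_gcd_eq_zero_left h)
  set e := n / m with he
  have hem : e * m = n := Nat.div_mul_cancel hmn
  have he0 : e ≠ 0 := by rintro h; rw [h, zero_mul] at hem; omega
  have hmx : m ∣ x - 1 := Nat.gcd_dvd_right _ _
  have hvm : ∀ p, m.factorization p =
      min (n.factorization p) ((x - 1).factorization p) := by
    intro p
    rw [hm, Nat.factorization_gcd hn.ne' hqs1]
    rfl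
  have hve : ∀ p, e.factorization p = n.factorization p - m.factorization p := by
    intro p
    rw [he, Nat.factorization_div hmn]
    rfl
  have hvmn : ∀ p, m.factorization p ≤ n.factorization p := fun p => by
    rw [hvm p]; exact min_le_left _ _
  have hpdvd : ∀ p, p.Prime → p ∣ n → p ∣ x - 1 := by
    intro p hp hpn
    refine dvd_trans ?_ (hrad.trans hmx)
    exact Finset.dvd_prod_of_mem _ (Nat.mem_primeFactors.mpr ⟨hp, hpn, hn.ne'⟩)
  -- Claim A : n ∣ x ^ e - 1
  have hxe1 : x ^ e - 1 ≠ 0 := by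
    have := Nat.one_lt_pow he0 hx1
    omega
  have claimA : n ∣ x ^ e - 1 := by
    rw [← Nat.factorization_le_iff_dvd hn.ne' hxe1]
    intro p
    by_cases hp : p.Prime
    · by_cases hpn : p ∣ n
      · have h1 := val_ge_of_prime hp hx1 (hpdvd p hp hpn) he0
        rw [← Nat.factorization_def _ hp, ← Nat.factorization_def _ hp,
          ← Nat.factorization_def _ hp] at h1
        have h2 := hvm p
        have h3 := hve p
        have h4 := hvmn p
        omega
      · simp [Nat.factorization_eq_zero_of_not_dvd hpn]
    · simp [Nat.factorization_eq_zero_of_not_prime _ hp]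
  set k := orderOf (q : ZMod n) with hk
  have hk0 : 0 < k := ord_pos hcop.symm hn
  have hkse : k ∣ s * e := by
    rw [hk, ord_dvd_iff (by omega), pow_mul]
    exact claimA
  have hnk : n ∣ q ^ k - 1 := by rw [hk]; exact dvd_ord_pow_sub_one (by omega)
  have hsk : s ∣ k := by
    rw [← hordm]
    exact (ord_dvd_iff (by omega) k).mpr (hmn.trans hnk)
  obtain ⟨t, hkt⟩ := hsk
  have ht0 : t ≠ 0 := by rintro rfl; omega
  have hxt1 : x ^ t - 1 ≠ 0 := by
    have := Nat.one_lt_pow ht0 hx1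
    omega
  have hnxt : n ∣ x ^ t - 1 := by rwa [hx, ← pow_mul, ← hkt]
  have hfn : ∀ p, n.factorization p ≤ (x ^ t - 1).factorization p := by
    intro p
    exact (Nat.factorization_le_iff_dvd hn.ne' hxt1).mpr hnxt p
  have claimB : e ∣ t := by
    rw [← Nat.factorization_le_iff_dvd he0 ht0]
    intro p
    by_cases hp : p.Prime
    · by_cases hpe : p ∣ e
      · have hpn : p ∣ n := hpe.trans (Dvd.intro_left m (by rw [mul_comm m e, hem]))
        have hfe1 : 1 ≤ e.factorization p := (Nat.Prime.dvd_iff_one_le_factorization hp he0).mp hpe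
        have hx4 : p = 2 → Even t → x % 4 = 1 := by
          rintro rfl _
          apply h4
          have h2m : (2:ℕ) ∣ m := by
            refine dvd_trans ?_ hrad
            exact Finset.dvd_prod_of_mem _ (Nat.mem_primeFactors.mpr ⟨hp, hpn, hn.ne'⟩)
          have hfm1 : 1 ≤ m.factorization 2 :=
            (Nat.Prime.dvd_iff_one_le_factorization hp hm0).mp h2m
          have hfn2 : 2 ≤ n.factorization 2 := by
            have := hve 2
            have := hvmn 2
            omega
          have := (Nat.Prime.pow_dvd_iff_le_factorization hp hn.ne').mpr hfn2
          simpa using this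
        have h1 := val_le_of_prime hp hx1 (hpdvd p hp hpn) ht0 hx4
        rw [← Nat.factorization_def _ hp, ← Nat.factorization_def _ hp,
          ← Nat.factorization_def _ hp] at h1
        have h2 := hvm p
        have h3 := hve p
        have h5 := hvmn p
        have h6 := hfn p
        omega
      · simp [Nat.factorization_eq_zero_of_not_dvd hpe]
    · simp [Nat.factorization_eq_zero_of_not_prime _ hp]
  have hesk : e * s ∣ k := by
    rw [hkt, mul_comm e s]
    exact mul_dvd_mul_left s claimB
  exact Nat.dvd_antisymm (by rwa [mul_comm s e] at hkse) hesk

lemma coprime_mod_iff {j m : ℕ} (hm : 0 < m) : Nat.Coprime (j % m) m ↔ Nat.Coprime j m := by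
  have h : Nat.gcd j m = Nat.gcd (j % m) m := by rw [Nat.gcd_comm, Nat.gcd_rec m j]
  unfold Nat.Coprime
  rw [h]

lemma cyclotomic_eq_prod_pow {Ω : Type*} [Field Ω] [IsAlgClosed Ω] {n m e : ℕ}
    (hn : 0 < n) (hem : e * m = n) (hnz : (n : Ω) ≠ 0)
    (htot : Nat.totient n = e * Nat.totient m)
    {ζ : Ω} (hζ : IsPrimitiveRoot ζ m) :
    (Polynomial.cyclotomic n Ω = ∏ j ∈ (Finset.range m).filter (fun j => Nat.Coprime j m),
        (X ^ e - C (ζ ^ j))) ∧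
    (∀ β : Ω, ∀ j : ℕ, Nat.Coprime j m → β ^ e = ζ ^ j → IsPrimitiveRoot β n) := by
  classical
  have hm0 : 0 < m := by
    rcases Nat.eq_zero_or_pos m with rfl | h
    · rw [mul_zero] at hem; omega
    · exact h
  have he0 : 0 < e := by
    rcases Nat.eq_zero_or_pos e with rfl | h
    · rw [zero_mul] at hem; omega
    · exact h
  set K := (Finset.range m).filter (fun j => Nat.Coprime j m) with hK
  have hKcard : K.card = Nat.totient m := by
    rw [hK, Nat.totient_eq_card_coprime]
    congr 1
    apply Finset.filter_congr
    intro j _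
    simp [Nat.coprime_comm]
  set G := ∏ j ∈ K, ((X : Polynomial Ω) ^ e - C (ζ ^ j)) with hG
  have hfne : ∀ j ∈ K, ((X : Polynomial Ω) ^ e - C (ζ ^ j)) ≠ 0 :=
    fun j _ => (monic_X_pow_sub_C _ he0.ne').ne_zero
  have hGmon : G.Monic := monic_prod_of_monic _ _ (fun j _ => monic_X_pow_sub_C _ he0.ne')
  have hGdeg : G.natDegree = e * Nat.totient m := by
    rw [hG, natDegree_prod _ _ hfne]
    have : ∀ j ∈ K, ((X : Polynomial Ω) ^ e - C (ζ ^ j)).natDegree = e :=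
      fun j _ => natDegree_X_pow_sub_C
    rw [Finset.sum_congr rfl this, Finset.sum_const, smul_eq_mul, hKcard, mul_comm]
  have hGsplits : Splits G := IsAlgClosed.splits G
  have hroots : Multiset.card G.roots = e * Nat.totient m := by
    rw [splits_iff_card_roots.mp hGsplits, hGdeg]
  haveI : NeZero ((n : ℕ) : Ω) := ⟨hnz⟩
  haveI := IsSepClosed.hasEnoughRootsOfUnity Ω n
  obtain ⟨ξ, hξ⟩ := HasEnoughRootsOfUnity.exists_primitiveRoot Ω n
  set P := primitiveRoots n Ω with hP
  have hPcard : P.card = e * Nat.totient m := by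
    rw [hP, hξ.card_primitiveRoots, htot]
  have hGne : G ≠ 0 := hGmon.ne_zero
  have hmemroots : ∀ β : Ω, ∀ j ∈ K, β ^ e = ζ ^ j → β ∈ G.roots := by
    intro β j hj hβ
    rw [mem_roots hGne]
    have : eval β G = 0 := by
      rw [hG, eval_prod]
      apply Finset.prod_eq_zero hj
      rw [eval_sub, eval_pow, eval_X, eval_C, hβ, sub_self]
    exact this
  have hPsub : P ⊆ G.roots.toFinset := by
    intro α hα
    have hα' : IsPrimitiveRoot α n := (mem_primitiveRoots hn).mp hα
    have hαe : IsPrimitiveRoot (α ^ e) m := hα'.pow hn hem.symm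
    have hαm : α ^ e ∈ nthRoots m (1 : Ω) := (mem_nthRoots hm0).mpr hαe.pow_eq_one
    rw [hζ.nthRoots_eq (one_pow m)] at hαm
    obtain ⟨j, hjmem, hj⟩ := Multiset.mem_map.mp hαm
    have hjm : j < m := by
      have := Multiset.mem_range.mp hjmem
      omega
    have hje : ζ ^ j = α ^ e := by rw [← hj]; ring
    have hcop : Nat.Coprime j m := by
      rw [← hζ.pow_iff_coprime hm0 j]
      rw [hje]; exact hαe
    have hjK : j ∈ K := by
      rw [hK, Finset.mem_filter, Finset.mem_range]
      exact ⟨hjm, hcop⟩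
    exact Multiset.mem_toFinset.mpr (hmemroots α j hjK hje.symm)
  have hcardle : G.roots.toFinset.card ≤ P.card := by
    rw [hPcard, ← hroots]
    exact Multiset.toFinset_card_le _
  have hfin : G.roots.toFinset = P := (Finset.eq_of_subset_of_card_le hPsub hcardle).symm
  have hnodup : G.roots = P.val := by
    have hdedup : G.roots.dedup = G.roots := by
      apply Multiset.eq_of_le_of_card_le (Multiset.dedup_le _)
      have h1 : Multiset.card G.roots.dedup = G.roots.toFinset.card := rfl
      rw [h1, hfin, hPcard, hroots]
    rw [← hdedup]
    have : G.roots.toFinset.val = G.roots.dedup := rfl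
    rw [← this, hfin]
  have hmain : Polynomial.cyclotomic n Ω = G := by
    rw [cyclotomic_eq_prod_X_sub_primitiveRoots hξ]
    rw [hGsplits.eq_prod_roots_of_monic hGmon, hnodup]
    rw [Finset.prod]
  refine ⟨hmain, ?_⟩
  intro β j hcop hβ
  have hj' : j % m ∈ K := by
    rw [hK, Finset.mem_filter, Finset.mem_range]
    exact ⟨Nat.mod_lt _ hm0, (coprime_mod_iff hm0).mpr hcop⟩
  have hζord : orderOf ζ = m := hζ.eq_orderOf.symm
  have hβ' : β ^ e = ζ ^ (j % m) := by
    rw [hβ, ← hζord]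
    exact (pow_mod_orderOf ζ j).symm
  have : β ∈ G.roots.toFinset := Multiset.mem_toFinset.mpr (hmemroots β (j % m) hj' hβ')
  rw [hfin] at this
  exact (mem_primitiveRoots hn).mp this

lemma coset_main {q s m : ℕ} (hq : 1 < q) (hqm : Nat.Coprime q m) (hm : 0 < m)
    (hords : orderOf (q : ZMod m) = s) (hs0 : 0 < s)
    (𝓒 : Finset ℕ) (h𝓒sub : 𝓒 ⊆ Finset.range m)
    (h𝓒 : ∀ x ∈ Finset.range m, ∃! i, i ∈ 𝓒 ∧ ∃ j : ℕ, i * q ^ j % m = x)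
    {M : Type*} [CommMonoid M] (f : ℕ → M) :
    (((𝓒.filter (fun i => Nat.Coprime i m)) ×ˢ Finset.range s).card
        = ((Finset.range m).filter (fun j => Nat.Coprime j m)).card) ∧
    (∏ p ∈ (𝓒.filter (fun i => Nat.Coprime i m)) ×ˢ Finset.range s, f (p.1 * q ^ p.2 % m)
        = ∏ x ∈ (Finset.range m).filter (fun j => Nat.Coprime j m), f x) := by
  classical
  set S := (𝓒.filter (fun i => Nat.Coprime i m)) ×ˢ Finset.range s with hS
  set T := (Finset.range m).filter (fun j => Nat.Coprime j m) with hT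
  have hqs1 : m ∣ q ^ s - 1 := by
    rw [← hords]
    exact dvd_ord_pow_sub_one (by omega)
  have hqsmod : q ^ s ≡ 1 [MOD m] := by
    have h1 : 1 ≤ q ^ s := Nat.one_le_pow _ _ (by omega)
    exact ((Nat.modEq_iff_dvd' h1).mpr hqs1).symm
  have hpowinj : ∀ u u' : ℕ, u ≤ u' → u' < s → q ^ u ≡ q ^ u' [MOD m] → u = u' := by
    intro u u' huu hu' hmod
    have hd : u' = u + (u' - u) := by omega
    rw [hd, pow_add] at hmod
    have hcg : Nat.gcd m (q ^ u) = 1 := ((Nat.Coprime.pow_left u hqm).symm : Nat.Coprime m _)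
    have h1 : 1 ≡ q ^ (u' - u) [MOD m] := by
      have := Nat.ModEq.cancel_left_of_coprime hcg (a := 1) (b := q ^ (u' - u))
        (by rw [mul_one]; exact hmod)
      exact this
    have h2 : m ∣ q ^ (u' - u) - 1 := by
      have hle : 1 ≤ q ^ (u' - u) := Nat.one_le_pow _ _ (by omega)
      exact (Nat.modEq_iff_dvd' hle).mp h1
    have h3 : s ∣ u' - u := by
      rw [← hords]
      exact (ord_dvd_iff (by omega) _).mpr h2
    have : u' - u = 0 := by
      rcases Nat.eq_zero_or_pos (u' - u) with h | h
      · exact h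
      · exact absurd (Nat.le_of_dvd h h3) (by omega)
    omega
  have hmaps : ∀ p ∈ S, p.1 * q ^ p.2 % m ∈ T := by
    rintro ⟨i, u⟩ hp
    rw [hS, Finset.mem_product, Finset.mem_filter] at hp
    obtain ⟨⟨hi𝓒, hicop⟩, _⟩ := hp
    rw [hT, Finset.mem_filter, Finset.mem_range]
    constructor
    · exact Nat.mod_lt _ hm
    · rw [coprime_mod_iff hm]
      exact Nat.Coprime.mul hicop (Nat.Coprime.pow_left u hqm)
  have hinj : ∀ p ∈ S, ∀ p' ∈ S, p.1 * q ^ p.2 % m = p'.1 * q ^ p'.2 % m → p = p' := by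
    rintro ⟨i, u⟩ hp ⟨i', u'⟩ hp' heq
    rw [hS, Finset.mem_product, Finset.mem_filter, Finset.mem_range] at hp hp'
    obtain ⟨⟨hi𝓒, hicop⟩, hu⟩ := hp
    obtain ⟨⟨hi𝓒', hicop'⟩, hu'⟩ := hp'
    set x := i * q ^ u % m with hx
    have hxmem : x ∈ Finset.range m := Finset.mem_range.mpr (Nat.mod_lt _ hm)
    obtain ⟨iw, hiw, huniq⟩ := h𝓒 x hxmem
    have h1 : i = iw := huniq i ⟨hi𝓒, u, rfl⟩
    have h2 : i' = iw := huniq i' ⟨hi𝓒', u', heq.symm⟩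
    have hii : i = i' := h1.trans h2.symm
    subst hii
    have hmeq : i * q ^ u % m = i * q ^ u' % m := by rw [← hx]; exact heq
    have hmod : q ^ u ≡ q ^ u' [MOD m] := by
      have hcg : Nat.gcd m i = 1 := (hicop.symm : Nat.Coprime m i)
      apply Nat.ModEq.cancel_left_of_coprime hcg
      exact hmeq
    have huu : u = u' := by
      rcases le_total u u' with h | h
      · exact hpowinj u u' h hu' hmod
      · exact (hpowinj u' u h hu hmod.symm).symm
    simp [huu]
  have hsurj : ∀ x ∈ T, ∃ p, ∃ (_ : p ∈ S), p.1 * q ^ p.2 % m = x := by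
    intro x hx
    rw [hT, Finset.mem_filter, Finset.mem_range] at hx
    obtain ⟨hxm, hxcop⟩ := hx
    obtain ⟨i, ⟨hi𝓒, j, hij⟩, _⟩ := h𝓒 x (Finset.mem_range.mpr hxm)
    have hicop : Nat.Coprime i m := by
      have h1 : Nat.Coprime (i * q ^ j) m := by
        rw [← coprime_mod_iff hm, hij]
        exact hxcop
      exact Nat.Coprime.coprime_dvd_left (dvd_mul_right i (q ^ j)) h1
    refine ⟨(i, j % s), ?_, ?_⟩
    · rw [hS, Finset.mem_product, Finset.mem_filter, Finset.mem_range]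
      exact ⟨⟨hi𝓒, hicop⟩, Nat.mod_lt _ hs0⟩
    · have hjq : q ^ j ≡ q ^ (j % s) [MOD m] := by
        have hdm : j = s * (j / s) + j % s := (Nat.div_add_mod j s).symm
        calc q ^ j = (q ^ s) ^ (j / s) * q ^ (j % s) := by
              rw [← pow_mul, ← pow_add, ← hdm]
        _ ≡ 1 ^ (j / s) * q ^ (j % s) [MOD m] :=
              Nat.ModEq.mul (hqsmod.pow _) (Nat.ModEq.refl _)
        _ = q ^ (j % s) := by rw [one_pow, one_mul]
      have : i * q ^ (j % s) ≡ i * q ^ j [MOD m] := Nat.ModEq.mul_left i hjq.symm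
      rw [← hij]
      exact this
  constructor
  · exact Finset.card_bij (fun p _ => p.1 * q ^ p.2 % m) hmaps hinj hsurj
  · exact Finset.prod_bij (fun p _ => p.1 * q ^ p.2 % m) hmaps hinj hsurj (fun p _ => rfl)

lemma fixed_iff_mem_range {F Ω : Type*} [Field F] [Fintype F] [Field Ω] [Algebra F Ω]
    {q : ℕ} (hF : Fintype.card F = q) (c : Ω) :
    c ^ q = c ↔ c ∈ Set.range (algebraMap F Ω) := by
  classical
  have hq : 1 < q := hF ▸ Fintype.one_lt_card
  constructor
  · intro hc
    set P : Polynomial Ω := X ^ q - X with hP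
    have hPne : P ≠ 0 := by
      intro h
      have hco : P.coeff q = 1 := by
        rw [hP, Polynomial.coeff_sub, Polynomial.coeff_X_pow, if_pos rfl,
          Polynomial.coeff_X, if_neg (by omega), sub_zero]
      rw [h, Polynomial.coeff_zero] at hco
      exact one_ne_zero hco.symm
    have hPdeg : P.natDegree ≤ q := by
      refine le_trans (Polynomial.natDegree_sub_le _ _) ?_
      simp [Polynomial.natDegree_X_pow, Polynomial.natDegree_X]
      omega
    set T : Finset Ω := Finset.univ.image (algebraMap F Ω) with hT
    have hTcard : T.card = q := by
      rw [hT, Finset.card_image_of_injective _ (algebraMap F Ω).injective,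
        Finset.card_univ, hF]
    have hTsub : T ⊆ P.roots.toFinset := by
      intro x hx
      rw [hT, Finset.mem_image] at hx
      obtain ⟨a, _, rfl⟩ := hx
      rw [Multiset.mem_toFinset, Polynomial.mem_roots hPne]
      show Polynomial.eval _ P = 0
      rw [hP, Polynomial.eval_sub, Polynomial.eval_pow, Polynomial.eval_X,
        ← map_pow, ← hF, FiniteField.pow_card, sub_self]
    have hcard : P.roots.toFinset.card ≤ T.card := by
      rw [hTcard]
      refine le_trans (Multiset.toFinset_card_le _) ?_
      exact le_trans (Polynomial.card_roots' P) hPdeg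
    have heq : T = P.roots.toFinset := Finset.eq_of_subset_of_card_le hTsub hcard
    have hcmem : c ∈ P.roots.toFinset := by
      rw [Multiset.mem_toFinset, Polynomial.mem_roots hPne]
      show Polynomial.eval _ P = 0
      rw [hP, Polynomial.eval_sub, Polynomial.eval_pow, Polynomial.eval_X, hc, sub_self]
    rw [← heq, hT, Finset.mem_image] at hcmem
    obtain ⟨a, _, ha⟩ := hcmem
    exact ⟨a, ha⟩
  · rintro ⟨a, rfl⟩
    rw [← map_pow, ← hF, FiniteField.pow_card]

lemma factor_lemma {F Ω : Type*} [Field F] [Fintype F] [Field Ω] [Algebra F Ω] [IsAlgClosed Ω]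
    {q n m e s : ℕ} (hF : Fintype.card F = q) (hn : 0 < n)
    (hs0 : 0 < s) (he0 : 0 < e)
    (hmq : m ∣ q ^ s - 1)
    (hordn : orderOf (q : ZMod n) = e * s)
    {ζ : Ω} (hζ : IsPrimitiveRoot ζ m)
    {γ : Ω} {i : ℕ} (hγ : γ = ζ ^ i) (hicop : Nat.Coprime i m)
    (hprim : ∀ β : Ω, ∀ j : ℕ, Nat.Coprime j m → β ^ e = ζ ^ j → IsPrimitiveRoot β n) :
    ∃ S : Polynomial F,
      S.map (algebraMap F Ω) = ∏ u ∈ Finset.range s, (X ^ e - C (γ ^ q ^ u)) ∧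
      S.Monic ∧ Irreducible S ∧ S.natDegree = e * s := by
  classical
  have hq : 1 < q := hF ▸ Fintype.one_lt_card
  set G : Polynomial Ω := ∏ u ∈ Finset.range s, (X ^ e - C (γ ^ q ^ u)) with hG
  have hmon : ∀ u ∈ Finset.range s, ((X : Polynomial Ω) ^ e - C (γ ^ q ^ u)).Monic :=
    fun u _ => monic_X_pow_sub_C _ he0.ne'
  have hGmon : G.Monic := monic_prod_of_monic _ _ hmon
  have hGdeg : G.natDegree = e * s := by
    rw [hG, natDegree_prod _ _ (fun u hu => (hmon u hu).ne_zero)]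
    rw [Finset.sum_congr rfl
      (fun u _ => (natDegree_X_pow_sub_C : ((X : Polynomial Ω) ^ e - C (γ ^ q ^ u)).natDegree = e))]
    rw [Finset.sum_const, Finset.card_range, smul_eq_mul, mul_comm]
  -- Frobenius invariance of G
  set p0 := ringChar F with hp0def
  haveI : CharP F p0 := ringChar.charP F
  obtain ⟨f0, hp0, hcard⟩ := FiniteField.card F p0
  haveI : CharP Ω p0 := charP_of_injective_algebraMap (algebraMap F Ω).injective p0
  haveI : ExpChar Ω p0 := ExpChar.prime hp0
  set σ : Ω →+* Ω := iterateFrobenius Ω p0 f0 with hσ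
  have hσx : ∀ x : Ω, σ x = x ^ q := by
    intro x
    rw [hσ, iterateFrobenius_def, ← hF, hcard]
  have hγm : γ ^ m = 1 := by
    rw [hγ, ← pow_mul, mul_comm, pow_mul, hζ.pow_eq_one, one_pow]
  have h2 : γ ^ q ^ s = γ ^ q ^ 0 := by
    rw [pow_zero, pow_one]
    obtain ⟨c, hc⟩ := hmq
    have hqs1 : q ^ s = m * c + 1 := by
      have h1 : 1 ≤ q ^ s := Nat.one_le_pow _ _ (by omega)
      omega
    rw [hqs1, pow_add, pow_mul, hγm, one_pow, one_mul, pow_one]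
  have hmap : G.map σ = G := by
    rw [hG, Polynomial.map_prod]
    have h1 : ∀ u ∈ Finset.range s, ((X : Polynomial Ω) ^ e - C (γ ^ q ^ u)).map σ
        = (X : Polynomial Ω) ^ e - C (γ ^ q ^ (u + 1)) := by
      intro u _
      rw [Polynomial.map_sub, Polynomial.map_pow, Polynomial.map_X, Polynomial.map_C, hσx,
        ← pow_mul, ← pow_succ]
    rw [Finset.prod_congr rfl h1]
    have hfne : ((X : Polynomial Ω) ^ e - C (γ ^ q ^ 0)) ≠ 0 :=
      (monic_X_pow_sub_C _ he0.ne').ne_zero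
    apply mul_right_cancel₀ hfne
    calc (∏ u ∈ Finset.range s, ((X : Polynomial Ω) ^ e - C (γ ^ q ^ (u + 1)))) *
          ((X : Polynomial Ω) ^ e - C (γ ^ q ^ 0))
        = ∏ u ∈ Finset.range (s + 1), ((X : Polynomial Ω) ^ e - C (γ ^ q ^ u)) :=
          (Finset.prod_range_succ' (fun u => (X : Polynomial Ω) ^ e - C (γ ^ q ^ u)) s).symm
      _ = (∏ u ∈ Finset.range s, ((X : Polynomial Ω) ^ e - C (γ ^ q ^ u))) *
          ((X : Polynomial Ω) ^ e - C (γ ^ q ^ s)) :=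
          Finset.prod_range_succ (fun u => (X : Polynomial Ω) ^ e - C (γ ^ q ^ u)) s
      _ = (∏ u ∈ Finset.range s, ((X : Polynomial Ω) ^ e - C (γ ^ q ^ u))) *
          ((X : Polynomial Ω) ^ e - C (γ ^ q ^ 0)) := by rw [h2]
  have hlift : G ∈ Polynomial.lifts (algebraMap F Ω) := by
    rw [Polynomial.lifts_iff_coeff_lifts]
    intro k
    rw [← fixed_iff_mem_range hF]
    have hck := congrArg (fun P : Polynomial Ω => P.coeff k) hmap
    simpa [Polynomial.coeff_map, hσx] using hck
  obtain ⟨S, hSmap, hSdeg, hSmon⟩ := Polynomial.lifts_and_degree_eq_and_monic hlift hGmon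
  have hSnat : S.natDegree = e * s := by
    rw [← hGdeg, ← hSmap, natDegree_map_eq_of_injective (algebraMap F Ω).injective]
  -- the factor has a primitive n-th root of unity as a root
  obtain ⟨β, hβe⟩ := IsAlgClosed.exists_pow_nat_eq (ζ ^ i) he0
  have hβprim : IsPrimitiveRoot β n := hprim β i hicop hβe
  have hGβ : Polynomial.eval β G = 0 := by
    rw [hG, Polynomial.eval_prod]
    apply Finset.prod_eq_zero (Finset.mem_range.mpr hs0)
    rw [Polynomial.eval_sub, Polynomial.eval_pow, Polynomial.eval_X, Polynomial.eval_C,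
      pow_zero, pow_one, hγ, hβe, sub_self]
  have hSβ : Polynomial.aeval β S = 0 := by
    rw [Polynomial.aeval_def, ← Polynomial.eval_map, hSmap, hGβ]
  have hint : IsIntegral F β := ⟨S, hSmon, by rwa [Polynomial.aeval_def] at hSβ⟩
  have hdvd : minpoly F β ∣ S := minpoly.dvd F β hSβ
  haveI := IntermediateField.adjoin.finiteDimensional hint
  set E := IntermediateField.adjoin F {β} with hE
  haveI : Finite E := Module.finite_of_finite F
  haveI : Fintype E := Fintype.ofFinite E
  set k := (minpoly F β).natDegree with hk
  have hkdef : Module.finrank F E = k := IntermediateField.adjoin.finrank hint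
  have hcardE : Fintype.card E = q ^ k := by
    rw [Module.card_eq_pow_finrank (K := F) (V := E), hF, hkdef]
  have hβmem : β ∈ E := IntermediateField.mem_adjoin_simple_self F β
  set βE : E := ⟨β, hβmem⟩ with hβE
  have hβ0 : β ≠ 0 := hβprim.ne_zero hn.ne'
  have hβE0 : βE ≠ 0 := by
    intro h
    exact hβ0 (congrArg (fun x : E => (x : Ω)) h)
  have hordβE : orderOf βE = n := by
    have h1 : orderOf ((βE : Ω)) = orderOf βE :=
      orderOf_injective (MonoidHomClass.toMonoidHom E.val)
        (fun a b hab => Subtype.ext hab) βE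
    have h2' : (βE : Ω) = β := rfl
    rw [h2', ← hβprim.eq_orderOf] at h1
    exact h1.symm
  have hnqk : n ∣ q ^ k - 1 := by
    have hu : orderOf (Units.mk0 βE hβE0) = n := by
      rw [← orderOf_units]
      simpa using hordβE
    have hdvdcard : n ∣ Fintype.card Eˣ := hu ▸ orderOf_dvd_card
    rwa [Fintype.card_units, hcardE] at hdvdcard
  have hesk : e * s ∣ k := by
    rw [← hordn]
    exact (ord_dvd_iff (by omega) k).mpr hnqk
  have hkle : k ≤ e * s := by
    rw [← hSnat]
    exact Polynomial.natDegree_le_of_dvd hdvd hSmon.ne_zero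
  have hk0 : 0 < k := minpoly.natDegree_pos hint
  have hkes : k = e * s := le_antisymm hkle (Nat.le_of_dvd hk0 hesk)
  obtain ⟨c, hc⟩ := hdvd
  have hmne : minpoly F β ≠ 0 := minpoly.ne_zero hint
  have hcne : c ≠ 0 := by
    rintro rfl
    rw [mul_zero] at hc
    exact hSmon.ne_zero hc
  have hdegc : c.natDegree = 0 := by
    have hmul : S.natDegree = (minpoly F β).natDegree + c.natDegree := by
      rw [hc, Polynomial.natDegree_mul hmne hcne]
    rw [hSnat, ← hk, hkes] at hmul
    omega
  have hcC : c = Polynomial.C (c.coeff 0) := Polynomial.eq_C_of_natDegree_eq_zero hdegc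
  have hlead : c.coeff 0 = 1 := by
    have h1 : S.leadingCoeff = (minpoly F β).leadingCoeff * c.leadingCoeff := by
      rw [hc, Polynomial.leadingCoeff_mul]
    rw [hSmon.leadingCoeff, (minpoly.monic hint).leadingCoeff, one_mul] at h1
    rw [Polynomial.leadingCoeff, hdegc] at h1
    exact h1.symm
  have hSmin : S = minpoly F β := by
    rw [hc, hcC, hlead, map_one, mul_one]
  have hirr : Irreducible S := hSmin ▸ minpoly.irreducible hint
  exact ⟨S, by rw [hSmap], hSmon, hirr, hSnat⟩

lemma spoly_eq_prod {Ω : Type*} [Field Ω] (q e c : ℕ) (γ : Ω) :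
    Spoly q e c γ = ∏ u ∈ Finset.range c, (X ^ e - C (γ ^ q ^ u)) := by
  classical
  set f : ℕ → Ω := fun u => γ ^ q ^ u with hf
  have hP := Multiset.prod_X_sub_X_eq_sum_esymm ((Finset.range c).val.map f)
  have hc : Multiset.card (Multiset.map f (Finset.range c).val) = c := by simp
  rw [hc] at hP
  have hL : (Multiset.map (fun t => X - C t) ((Finset.range c).val.map f)).prod
      = ∏ u ∈ Finset.range c, (X - C (f u)) := by
    rw [Multiset.map_map]
    rfl
  rw [hL] at hP
  have hcomp := congrArg (fun P : Polynomial Ω => P.comp ((X : Polynomial Ω) ^ e)) hP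
  simp only [Polynomial.prod_comp] at hcomp
  have hfac : ∀ u ∈ Finset.range c, (X - C (f u)).comp ((X : Polynomial Ω) ^ e)
      = X ^ e - C (f u) := by
    intro u _
    simp [Polynomial.sub_comp]
  rw [Finset.prod_congr rfl hfac] at hcomp
  have hsum : (∑ j ∈ Finset.range (c + 1),
        (-1 : Polynomial Ω) ^ j * (C (((Finset.range c).val.map f).esymm j) * X ^ (c - j))).comp
        ((X : Polynomial Ω) ^ e)
      = ∑ j ∈ Finset.range (c + 1),
        (-1 : Polynomial Ω) ^ j * (C (((Finset.range c).val.map f).esymm j) * (X ^ e) ^ (c - j)) := by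
    rw [Polynomial.comp, Polynomial.eval₂_finset_sum]
    refine Finset.sum_congr rfl fun j _ => ?_
    simp [Polynomial.eval₂_mul, Polynomial.eval₂_pow, Polynomial.eval₂_C]
  rw [hsum] at hcomp
  -- now rewrite Spoly via reflection
  rw [Spoly]
  have hrefl := Finset.sum_range_reflect
    (fun l => Polynomial.C ((-1 : Ω) ^ (c - l) *
      ∑ U ∈ Finset.powersetCard (c - l) (Finset.range c), ∏ u ∈ U, γ ^ q ^ u) *
      Polynomial.X ^ (e * l)) (c + 1)
  rw [← hrefl,
    show (∏ u ∈ Finset.range c, ((X : Polynomial Ω) ^ e - C (γ ^ q ^ u)))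
      = ∏ u ∈ Finset.range c, ((X : Polynomial Ω) ^ e - C (f u)) from rfl, hcomp]
  refine Finset.sum_congr rfl fun j hj => ?_
  have hjc : j ≤ c := by
    have := Finset.mem_range.mp hj
    omega
  have h1 : c + 1 - 1 - j = c - j := by omega
  have h2 : c - (c - j) = j := by omega
  rw [h1, h2, Finset.esymm_map_val]
  simp only [hf]
  rw [map_mul, map_pow, map_neg, map_one, ← pow_mul, mul_comm e (c - j)]
  ring

lemma card_coprime_filter (m : ℕ) :
    ((Finset.range m).filter (fun j => Nat.Coprime j m)).card = Nat.totient m := by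
  rw [Nat.totient_eq_card_coprime]
  congr 1
  apply Finset.filter_congr
  intro j _
  simp [Nat.coprime_comm]

/-- the closed formula for the factorization of the `n`-th cyclotomic
polynomial `Φ_n` over `F_q` for any positive integer `n` with `gcd(n, q) = 1`:  `Φ_n`
factors into exactly `φ(d⁽ˢ⁾)/s` monic irreducible factors, each of degree `(n/d⁽ˢ⁾) s`. -/
theorem stmt15 (q n : ℕ) (hn : 0 < n) (hcop : Nat.Coprime n q)
    (F Ω : Type*) [Field F] [Fintype F] [Field Ω] [Algebra F Ω] [IsAlgClosed Ω]
    (hF : Fintype.card F = q)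
    (w : ℕ) (hw : w = orderOf (q : ZMod (∏ p ∈ n.primeFactors, p)))
    (s : ℕ) (hs : s = if ¬ 4 ∣ n ∨ q ^ w % 4 = 1 then w else 2 * w)
    (d : ℕ → ℕ) (hd : ∀ t : ℕ, d t = Nat.gcd n (q ^ t - 1))
    -- `𝓒` is a complete set of representatives of the `q`-cyclotomic cosets modulo `d s`
    (𝓒 : Finset ℕ) (h𝓒sub : 𝓒 ⊆ Finset.range (d s))
    (h𝓒 : ∀ x ∈ Finset.range (d s), ∃! i, i ∈ 𝓒 ∧ ∃ j : ℕ, i * q ^ j % d s = x)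
    (ζ : Ω) (hζ : IsPrimitiveRoot ζ (d s)) :
    (𝓒.filter (fun i => Nat.Coprime i (d s))).card = Nat.totient (d s) / s ∧
    ((Polynomial.cyclotomic n F).map (algebraMap F Ω) =
      ∏ i ∈ 𝓒.filter (fun i => Nat.Coprime i (d s)), Spoly q (n / d s) s (ζ ^ i)) ∧
    ∀ i ∈ 𝓒.filter (fun i => Nat.Coprime i (d s)),
      ∃ S : Polynomial F, S.map (algebraMap F Ω) = Spoly q (n / d s) s (ζ ^ i) ∧
        S.Monic ∧ Irreducible S ∧ S.natDegree = (n / d s) * s := by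
  classical
  have hq : 1 < q := hF ▸ Fintype.one_lt_card
  obtain ⟨hs0, hrad, hordm, h4⟩ := ord_m_spec q n w s hn hq hcop hw hs
  have hds : d s = Nat.gcd n (q ^ s - 1) := hd s
  simp only [hds] at h𝓒sub h𝓒 hζ ⊢
  set m := Nat.gcd n (q ^ s - 1) with hm
  have hmn : m ∣ n := Nat.gcd_dvd_left _ _
  have hm0 : 0 < m :=
    Nat.pos_of_ne_zero (fun h => hn.ne' (Nat.eq_zero_of_gcd_eq_zero_left h))
  set e := n / m with he
  have hem : e * m = n := Nat.div_mul_cancel hmn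
  have he0 : 0 < e := Nat.div_pos (Nat.le_of_dvd hn hmn) hm0
  have hordn : orderOf (q : ZMod n) = e * s := ord_n_eq q n s hn hq hcop hs0 hrad hordm h4
  have htot : Nat.totient n = e * Nat.totient m := by
    conv_lhs => rw [← hem]
    refine totient_mul_of_primes_dvd e m hm0 (fun p hp hpe => ?_)
    have hpn : p ∣ n := hpe.trans ⟨m, hem.symm⟩
    refine dvd_trans ?_ hrad
    exact Finset.dvd_prod_of_mem _ (Nat.mem_primeFactors.mpr ⟨hp, hpn, hn.ne'⟩)
  haveI : CharP F (ringChar F) := ringChar.charP F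
  obtain ⟨f0, hp0, hcard⟩ := FiniteField.card F (ringChar F)
  haveI : CharP Ω (ringChar F) :=
    charP_of_injective_algebraMap (algebraMap F Ω).injective (ringChar F)
  have hnΩ : ((n : ℕ) : Ω) ≠ 0 := by
    intro h
    have hp0n : ringChar F ∣ n := (CharP.cast_eq_zero_iff Ω (ringChar F) n).mp h
    have hp0q : ringChar F ∣ q := by
      rw [← hF, hcard]
      exact dvd_pow_self _ (by exact_mod_cast f0.ne_zero)
    have h1 : ringChar F ∣ 1 := hcop ▸ Nat.dvd_gcd hp0n hp0q
    exact hp0.one_lt.ne' (Nat.dvd_one.mp h1)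
  obtain ⟨hcyc, hprim⟩ := cyclotomic_eq_prod_pow hn hem hnΩ htot hζ
  have hqm : Nat.Coprime q m := (Nat.Coprime.coprime_dvd_left hmn hcop).symm
  obtain ⟨hcard1, hprod1⟩ := coset_main hq hqm hm0 hordm hs0 𝓒 h𝓒sub h𝓒
      (f := fun x => ((X : Polynomial Ω) ^ e - C (ζ ^ x)))
  have hord : orderOf ζ = m := hζ.eq_orderOf.symm
  refine ⟨?_, ?_, ?_⟩
  · rw [Finset.card_product, Finset.card_range, card_coprime_filter] at hcard1
    rw [← hcard1, Nat.mul_div_cancel _ hs0]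
  · rw [map_cyclotomic, hcyc, ← hprod1, Finset.prod_product]
    refine Finset.prod_congr rfl fun i hi => ?_
    rw [spoly_eq_prod]
    refine Finset.prod_congr rfl fun u hu => ?_
    congr 1
    congr 1
    rw [← pow_mul, ← hord]
    exact pow_mod_orderOf ζ _
  · intro i hi
    rw [Finset.mem_filter] at hi
    obtain ⟨hi𝓒, hicop⟩ := hi
    obtain ⟨S, hSmap, hSmon, hSirr, hSdeg⟩ :=
      factor_lemma hF hn hs0 he0 (Nat.gcd_dvd_right n _) hordn hζ (γ := ζ ^ i) rfl hicop hprim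
    exact ⟨S, by rw [hSmap]; exact (spoly_eq_prod q e s (ζ ^ i)).symm, hSmon, hSirr, hSdeg⟩
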